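/- arXiv:2110.12782 — 6 statements merged into one kernel-verified Lean document; each statement's English description precedes it below -/
import Mathlib

section
/- Let A be an n×n real symmetric matrix with nonnegative entries and no zero rows, let D be the diagonal matrix whose i-th diagonal entry d_i is the i-th row sum of A, and assume every d_i ≥ 1. Let α ∈ (0, 1/2], let k < n, let ε ≥ 0, and let U ∈ ℝ^{n×k}, Λ ∈ ℝ^{k×k} be matrices satisfying the approximation guarantee ‖D^{-α} A D^{-α} − U Λ Uᵀ‖_F ≤ (1+ε)·√(Σ_{j=k+1}^{n} |λ_j|²), where |λ_1| ≥ |λ_2| ≥ … ≥ |λ_n| are the decreasingly ordered absolute values of the eigenvalues of the symmetric matrix D^{-α} A D^{-α}. Then ‖D^{-1/2} A D^{-1/2} − D^{-1/2+α} U Λ Uᵀ D^{-1/2+α}‖_F ≤ (1+ε)·√(Σ_{j=k+1}^{n} |λ_j|²). -/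
open Matrix

/-- Frobenius norm of a real matrix: `√(Σᵢⱼ Xᵢⱼ²)`. -/
noncomputable def frobNorm {m n : ℕ} (X : Matrix (Fin m) (Fin n) ℝ) : ℝ :=
  Real.sqrt (∑ i, ∑ j, X i j ^ 2)

/-- approximation guarantee transfers from the modified Laplacian
`D^{-α} A D^{-α}` to the normalized one `D^{-1/2} A D^{-1/2}`. -/
theorem netmfplus_main_bound {n k : ℕ} (hk : k < n)
    (A : Matrix (Fin n) (Fin n) ℝ) (hA : A.IsHermitian)
    (hApos : ∀ i j, 0 ≤ A i j)
    (d : Fin n → ℝ) (hd : ∀ i, d i = ∑ j, A i j)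
    (hd1 : ∀ i, 1 ≤ d i)
    (α : ℝ) (hα0 : 0 < α) (hα : α ≤ 1 / 2)
    (ε : ℝ) (hε : 0 ≤ ε)
    (U : Matrix (Fin n) (Fin k) ℝ) (Λ : Matrix (Fin k) (Fin k) ℝ)
    (N : Matrix (Fin n) (Fin n) ℝ)
    (hN : N = Matrix.diagonal (fun i => d i ^ (-α)) * A * Matrix.diagonal (fun i => d i ^ (-α)))
    (hNsymm : N.IsHermitian)
    -- `lamAbs` is the decreasing rearrangement of the absolute values of the
    -- eigenvalues of `N = D^{-α} A D^{-α}` (counted with multiplicity)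
    (lamAbs : Fin n → ℝ) (e : Fin n ≃ Fin n)
    (hlam : ∀ i, lamAbs i = |hNsymm.eigenvalues (e i)|)
    (hmono : Antitone lamAbs)
    (happrox : frobNorm (N - U * Λ * Uᵀ) ≤
      (1 + ε) * Real.sqrt (∑ j ∈ Finset.Ici (⟨k, hk⟩ : Fin n), lamAbs j ^ 2)) :
    frobNorm
        (Matrix.diagonal (fun i => d i ^ (-(1 : ℝ) / 2)) * A *
            Matrix.diagonal (fun i => d i ^ (-(1 : ℝ) / 2)) -
          Matrix.diagonal (fun i => d i ^ (-(1 : ℝ) / 2 + α)) * (U * Λ * Uᵀ) *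
            Matrix.diagonal (fun i => d i ^ (-(1 : ℝ) / 2 + α))) ≤
      (1 + ε) * Real.sqrt (∑ j ∈ Finset.Ici (⟨k, hk⟩ : Fin n), lamAbs j ^ 2) := by
  set m : Fin n → ℝ := fun i => d i ^ (-(1 : ℝ) / 2 + α) with hm
  have hdpos : ∀ i, (0 : ℝ) < d i := fun i => lt_of_lt_of_le one_pos (hd1 i)
  have key : ∀ i, m i * d i ^ (-α) = d i ^ (-(1 : ℝ) / 2) := by
    intro i
    rw [hm]
    simp only
    rw [← Real.rpow_add (hdpos i)]
    norm_num
  have hsplit : Matrix.diagonal (fun i => d i ^ (-(1 : ℝ) / 2)) * A *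
      Matrix.diagonal (fun i => d i ^ (-(1 : ℝ) / 2)) =
      Matrix.diagonal m * N * Matrix.diagonal m := by
    rw [hN]
    ext i j
    simp only [Matrix.mul_diagonal, Matrix.diagonal_mul]
    calc d i ^ (-(1:ℝ) / 2) * A i j * d j ^ (-(1:ℝ) / 2)
        = (m i * d i ^ (-α)) * A i j * (m j * d j ^ (-α)) := by rw [key i, key j]
      _ = m i * (d i ^ (-α) * A i j * d j ^ (-α)) * m j := by ring
  have hfactor : Matrix.diagonal (fun i => d i ^ (-(1 : ℝ) / 2)) * A *
      Matrix.diagonal (fun i => d i ^ (-(1 : ℝ) / 2)) -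
      Matrix.diagonal m * (U * Λ * Uᵀ) * Matrix.diagonal m =
      Matrix.diagonal m * (N - U * Λ * Uᵀ) * Matrix.diagonal m := by
    rw [hsplit, Matrix.mul_sub, Matrix.sub_mul]
  rw [hfactor]
  have hm01 : ∀ i, 0 ≤ m i ∧ m i ≤ 1 := by
    intro i
    exact ⟨Real.rpow_nonneg (le_of_lt (hdpos i)) _,
      Real.rpow_le_one_of_one_le_of_nonpos (hd1 i) (by linarith)⟩
  have hle : frobNorm (Matrix.diagonal m * (N - U * Λ * Uᵀ) * Matrix.diagonal m) ≤
      frobNorm (N - U * Λ * Uᵀ) := by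
    unfold frobNorm
    apply Real.sqrt_le_sqrt
    apply Finset.sum_le_sum
    intro i _
    apply Finset.sum_le_sum
    intro j _
    have hentry : (Matrix.diagonal m * (N - U * Λ * Uᵀ) * Matrix.diagonal m) i j =
        m i * (N - U * Λ * Uᵀ) i j * m j := by
      rw [Matrix.mul_diagonal, Matrix.diagonal_mul]
    rw [hentry]
    have h1 := hm01 i
    have h2 := hm01 j
    have hab0 : 0 ≤ m i * m j := mul_nonneg h1.1 h2.1
    have hab1 : m i * m j ≤ 1 := mul_le_one₀ h1.2 h2.1 h2.2
    have hsq : (m i * m j) ^ 2 ≤ 1 := pow_le_one₀ hab0 hab1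
    calc (m i * (N - U * Λ * Uᵀ) i j * m j) ^ 2
        = (m i * m j) ^ 2 * (N - U * Λ * Uᵀ) i j ^ 2 := by ring
      _ ≤ 1 * (N - U * Λ * Uᵀ) i j ^ 2 := mul_le_mul_of_nonneg_right hsq (sq_nonneg _)
      _ = (N - U * Λ * Uᵀ) i j ^ 2 := one_mul _
  exact le_trans hle happrox
end

section
/- (Eckart–Young, Frobenius-norm lower bound) Let X be an m×n real matrix with decreasingly ordered singular values σ_1(X) ≥ σ_2(X) ≥ … ≥ σ_{min(m,n)}(X), and let k < min(m,n). Then for every m×n real matrix B of rank at most k, ‖X − B‖_F ≥ √(Σ_{j=k+1}^{min(m,n)} σ_j(X)²). -/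
open Matrix

/-- The singular values of a real matrix `X`: the nonnegative square roots of the
eigenvalues of the positive semidefinite matrix `XᵀX`, counted with multiplicity. -/
noncomputable def singularValues {m n : ℕ} (X : Matrix (Fin m) (Fin n) ℝ) : Fin n → ℝ :=
  fun i => Real.sqrt ((by simpa [Matrix.conjTranspose_eq_transpose_of_trivial] using
        Matrix.isHermitian_conjTranspose_mul_self X :
      (Xᵀ * X).IsHermitian).eigenvalues i)

namespace EckartYoungAux

open scoped RealInnerProductSpace

variable {m n : ℕ}

/-- The eigenvalues of `XᵀX`. -/
noncomputable def lam (X : Matrix (Fin m) (Fin n) ℝ) : Fin n → ℝ :=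
  (by simpa [Matrix.conjTranspose_eq_transpose_of_trivial] using
        Matrix.isHermitian_conjTranspose_mul_self X : (Xᵀ * X).IsHermitian).eigenvalues

/-- An orthonormal eigenbasis of `XᵀX`. -/
noncomputable def ub (X : Matrix (Fin m) (Fin n) ℝ) :
    OrthonormalBasis (Fin n) ℝ (EuclideanSpace ℝ (Fin n)) :=
  (by simpa [Matrix.conjTranspose_eq_transpose_of_trivial] using
        Matrix.isHermitian_conjTranspose_mul_self X : (Xᵀ * X).IsHermitian).eigenvectorBasis

lemma lam_nonneg (X : Matrix (Fin m) (Fin n) ℝ) (j : Fin n) : 0 ≤ lam X j :=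
  Matrix.eigenvalues_conjTranspose_mul_self_nonneg X j

lemma inner_euc (x y : EuclideanSpace ℝ (Fin n)) : ⟪x, y⟫ = ∑ i, x i * y i := by
  simp [PiLp.inner_apply, RCLike.inner_apply, conj_trivial]
  exact Finset.sum_congr rfl fun _ _ => mul_comm _ _

lemma ub_sq_sum (X : Matrix (Fin m) (Fin n) ℝ) (j : Fin n) : ∑ i, (ub X j i) ^ 2 = 1 := by
  have h := real_inner_self_eq_norm_sq (ub X j)
  rw [inner_euc, (ub X).orthonormal.1 j] at h
  simpa [sq] using h.trans (by norm_num)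

/-- Bessel's inequality, concretely. -/
lemma bessel_aux {d : ℕ} {W : Fin d → EuclideanSpace ℝ (Fin n)} (hW : Orthonormal ℝ W)
    (x : EuclideanSpace ℝ (Fin n)) (hx : ‖x‖ = 1) :
    ∑ i : Fin d, (∑ t, x t * W i t) ^ 2 ≤ 1 := by
  have h := hW.sum_inner_products_le (s := Finset.univ) x
  rw [hx] at h
  calc ∑ i : Fin d, (∑ t, x t * W i t) ^ 2
      = ∑ i : Fin d, ‖⟪W i, x⟫‖ ^ 2 := by
        refine Finset.sum_congr rfl fun i _ => ?_
        rw [inner_euc, Real.norm_eq_abs, sq_abs]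
        congr 1
        exact Finset.sum_congr rfl fun t _ => mul_comm _ _
    _ ≤ 1 ^ 2 := h
    _ = 1 := one_pow 2

/-- Parseval's identity, concretely. -/
lemma parseval_aux (X : Matrix (Fin m) (Fin n) ℝ) (x : EuclideanSpace ℝ (Fin n)) (hx : ‖x‖ = 1) :
    ∑ j, (∑ t, ub X j t * x t) ^ 2 = 1 := by
  have h := (ub X).sum_inner_mul_inner x x
  have hxx : ⟪x, x⟫ = 1 := by
    rw [real_inner_self_eq_norm_sq, hx]; norm_num
  rw [hxx] at h
  calc ∑ j, (∑ t, ub X j t * x t) ^ 2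
      = ∑ j, ⟪x, ub X j⟫ * ⟪ub X j, x⟫ := by
        refine Finset.sum_congr rfl fun j _ => ?_
        rw [inner_euc, inner_euc, sq]
        congr 1
        exact Finset.sum_congr rfl fun t _ => mul_comm _ _
    _ = 1 := h

/-- The quadratic form `‖Xw‖²` expanded in the eigenbasis of `XᵀX`. -/
lemma key (X : Matrix (Fin m) (Fin n) ℝ) (w : Fin n → ℝ) :
    ∑ i, (X *ᵥ w) i ^ 2 = ∑ j, lam X j * (∑ i, ub X j i * w i) ^ 2 := by
  have hA : (Xᵀ * X).IsHermitian := by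
    simpa [Matrix.conjTranspose_eq_transpose_of_trivial] using
      Matrix.isHermitian_conjTranspose_mul_self X
  have h1 : ∑ i, (X *ᵥ w) i ^ 2 = w ⬝ᵥ ((Xᵀ * X) *ᵥ w) := by
    rw [← Matrix.mulVec_mulVec, Matrix.dotProduct_mulVec w Xᵀ, Matrix.vecMul_transpose]
    simp [dotProduct, sq]
  rw [h1]
  conv_lhs => rw [hA.spectral_theorem, Unitary.conjStarAlgAut_apply]
  set U : Matrix (Fin n) (Fin n) ℝ := (hA.eigenvectorUnitary : Matrix (Fin n) (Fin n) ℝ) with hU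
  rw [← Matrix.mulVec_mulVec, ← Matrix.mulVec_mulVec, Matrix.dotProduct_mulVec w U]
  have hv : w ᵥ* U = (star U) *ᵥ w := by
    funext j
    simp [Matrix.vecMul, Matrix.mulVec, dotProduct, Matrix.star_apply, mul_comm]
  rw [hv]
  have hcol : ∀ j, ((star U) *ᵥ w) j = ∑ i, ub X j i * w i := by
    intro j
    simp [Matrix.mulVec, dotProduct, Matrix.star_apply, hU, ub]
  have hdiag : ∀ v : Fin n → ℝ,
      v ⬝ᵥ ((Matrix.diagonal (RCLike.ofReal ∘ hA.eigenvalues) : Matrix (Fin n) (Fin n) ℝ) *ᵥ v)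
        = ∑ j, hA.eigenvalues j * v j ^ 2 := by
    intro v
    simp [dotProduct, Matrix.mulVec_diagonal, sq]
    exact Finset.sum_congr rfl fun j _ => by ring
  rw [hdiag]
  exact Finset.sum_congr rfl fun j _ => by rw [hcol j]; rfl

/-- The squared Frobenius norm equals the sum of the eigenvalues of `MᵀM`. -/
lemma frob_eq_sum_lam (M : Matrix (Fin m) (Fin n) ℝ) :
    ∑ i, ∑ j, M i j ^ 2 = ∑ j, lam M j := by
  rw [Finset.sum_comm]
  have hcol : ∀ j : Fin n, ∑ i, M i j ^ 2 = ∑ t, lam M t * (ub M t j) ^ 2 := by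
    intro j
    have h := key M (Pi.single j 1)
    simp only [Matrix.mulVec_single, MulOpposite.op_one, one_smul] at h
    rw [show (∑ i, M i j ^ 2) = ∑ i, M.col j i ^ 2 from rfl]
    rw [h]
    refine Finset.sum_congr rfl fun t _ => ?_
    congr 1
    rw [Finset.sum_eq_single j]
    · simp
    · intro b _ hb; simp [Pi.single_eq_of_ne hb]
    · simp
  calc ∑ j, ∑ i, M i j ^ 2 = ∑ j, ∑ t, lam M t * ub M t j ^ 2 :=
        Finset.sum_congr rfl fun j _ => hcol j
    _ = ∑ t, lam M t * ∑ j, ub M t j ^ 2 := by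
        rw [Finset.sum_comm]
        exact Finset.sum_congr rfl fun t _ => by rw [Finset.mul_sum]
    _ = ∑ t, lam M t := by
        refine Finset.sum_congr rfl fun t _ => by rw [ub_sq_sum, mul_one]

/-- The majorization step: a `[0,1]`-weighted sum with total weight at least `n - k`
dominates the tail sum of an antitone nonnegative sequence. -/
lemma major {n k d : ℕ} (hkn : k < n) (σ c : Fin n → ℝ) (hσ0 : ∀ j, 0 ≤ σ j)
    (hanti : Antitone σ) (hc0 : ∀ j, 0 ≤ c j) (hc1 : ∀ j, c j ≤ 1)
    (hsum : ∑ j, c j = (d : ℝ)) (hd : n - k ≤ d) :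
    ∑ j ∈ Finset.Ici (⟨k, hkn⟩ : Fin n), σ j ^ 2 ≤ ∑ j, σ j ^ 2 * c j := by
  classical
  set a : Fin n := ⟨k, hkn⟩
  set S : Finset (Fin n) := Finset.Ici a with hSdef
  set t : ℝ := σ a ^ 2 with ht
  have ht0 : 0 ≤ t := sq_nonneg _
  have hS : (S.card : ℝ) = (n - k : ℕ) := by
    rw [hSdef, Fin.card_Ici]
  have h1 : ∑ j ∈ S, (σ j ^ 2 - t * (1 - c j)) ≤ ∑ j ∈ S, σ j ^ 2 * c j := by
    refine Finset.sum_le_sum fun j hj => ?_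
    have hja : a ≤ j := Finset.mem_Ici.mp hj
    have hσj : σ j ^ 2 ≤ t := by
      rw [ht]
      exact pow_le_pow_left₀ (hσ0 j) (hanti hja) 2
    nlinarith [hc1 j, hc0 j]
  have h2 : ∑ j ∈ Sᶜ, t * c j ≤ ∑ j ∈ Sᶜ, σ j ^ 2 * c j := by
    refine Finset.sum_le_sum fun j hj => ?_
    have hja : j ≤ a := by
      rw [Finset.mem_compl, hSdef, Finset.mem_Ici] at hj
      exact le_of_not_ge hj
    have hσj : t ≤ σ j ^ 2 := by
      rw [ht]
      exact pow_le_pow_left₀ (hσ0 a) (hanti hja) 2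
    exact mul_le_mul_of_nonneg_right hσj (hc0 j)
  have hsplit : ∑ j ∈ S, σ j ^ 2 * c j + ∑ j ∈ Sᶜ, σ j ^ 2 * c j = ∑ j, σ j ^ 2 * c j :=
    Finset.sum_add_sum_compl S _
  have hcsplit : ∑ j ∈ S, c j + ∑ j ∈ Sᶜ, c j = (d : ℝ) := by
    rw [Finset.sum_add_sum_compl]; exact hsum
  have e1 : ∑ j ∈ S, t * (1 - c j) = (S.card : ℝ) * t - t * ∑ j ∈ S, c j := by
    rw [← Finset.mul_sum, Finset.sum_sub_distrib, Finset.sum_const, nsmul_eq_mul]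
    ring
  have h1' : ∑ j ∈ S, (σ j ^ 2 - t * (1 - c j))
      = ∑ j ∈ S, σ j ^ 2 - (S.card : ℝ) * t + t * ∑ j ∈ S, c j := by
    rw [Finset.sum_sub_distrib, e1]
    ring
  have hcard : (S.card : ℝ) ≤ (d : ℝ) := by
    rw [hS]; exact_mod_cast hd
  have e2 : ∑ j ∈ Sᶜ, t * c j = t * ∑ j ∈ Sᶜ, c j := by rw [← Finset.mul_sum]
  have hAB : t * ∑ j ∈ S, c j + t * ∑ j ∈ Sᶜ, c j = t * (d : ℝ) := by
    rw [← mul_add, hcsplit]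
  have hpos' : (S.card : ℝ) * t ≤ t * (d : ℝ) := by nlinarith
  rw [h1'] at h1
  rw [e2] at h2
  linarith [h1, h2, hsplit, hpos', hAB]

end EckartYoungAux

open EckartYoungAux

/-- Eckart–Young, Frobenius-norm lower bound: for any matrix `B` of
rank at most `k`, `‖X − B‖_F ≥ √(Σ_{j>k} σⱼ(X)²)`.  (0-based: the tail sum is over
indices `j ≥ k`; singular values with index beyond `min m n` vanish.) -/
theorem eckart_young_frobenius_lower_bound {m n k : ℕ}
    (X : Matrix (Fin m) (Fin n) ℝ)
    (σ : Fin n → ℝ) (e : Fin n ≃ Fin n)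
    (hσ : ∀ i, σ i = singularValues X (e i))
    (hanti : Antitone σ)
    (hk : k < min m n)
    (B : Matrix (Fin m) (Fin n) ℝ) (hB : B.rank ≤ k) :
    Real.sqrt (∑ j ∈ Finset.Ici (⟨k, lt_of_lt_of_le hk (min_le_right m n)⟩ : Fin n), σ j ^ 2) ≤
      frobNorm (X - B) := by
  classical
  have hkn : k < n := lt_of_lt_of_le hk (min_le_right m n)
  set M : Matrix (Fin m) (Fin n) ℝ := X - B with hM
  -- kernel of B
  set K : Submodule ℝ (EuclideanSpace ℝ (Fin n)) :=
    LinearMap.ker (Matrix.toEuclideanLin B) with hKdef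
  have hrank : B.rank = Module.finrank ℝ (LinearMap.range (Matrix.toEuclideanLin B)) := by
    rw [Matrix.toEuclideanLin_eq_toLin]
    exact Matrix.rank_eq_finrank_range_toLin B _ _
  have hrn := LinearMap.finrank_range_add_finrank_ker (Matrix.toEuclideanLin B)
  rw [finrank_euclideanSpace, Fintype.card_fin] at hrn
  set d := Module.finrank ℝ K with hd
  have hdk : n - k ≤ d := by
    rw [hrank] at hB
    omega
  -- orthonormal family inside the kernel
  set bK := stdOrthonormalBasis ℝ K with hbK
  set W : Fin d → EuclideanSpace ℝ (Fin n) := fun i => (bK i : EuclideanSpace ℝ (Fin n)) with hW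
  have hWo : Orthonormal ℝ W := by
    have h := bK.orthonormal
    rw [orthonormal_iff_ite] at h ⊢
    intro i j
    rw [← h i j]
    rfl
  have hWnorm : ∀ i, ‖W i‖ = 1 := hWo.1
  have hWK : ∀ i, B *ᵥ (W i : Fin n → ℝ) = 0 := by
    intro i
    have h2 : Matrix.toEuclideanLin B (W i) = 0 := by
      exact LinearMap.mem_ker.mp (bK i).2
    have h3 := congrArg (WithLp.equiv 2 (Fin m → ℝ)) h2
    simpa using h3
  -- the weights
  set c : Fin n → ℝ := fun j => ∑ i : Fin d, (∑ t, ub X j t * (W i) t) ^ 2 with hc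
  have hc0 : ∀ j, 0 ≤ c j := fun j => Finset.sum_nonneg fun i _ => sq_nonneg _
  have hc1 : ∀ j, c j ≤ 1 := fun j => bessel_aux hWo (ub X j) ((ub X).orthonormal.1 j)
  have hcsum : ∑ j, c j = (d : ℝ) := by
    rw [Finset.sum_comm]
    calc ∑ i : Fin d, ∑ j, (∑ t, ub X j t * W i t) ^ 2 = ∑ _i : Fin d, (1 : ℝ) :=
          Finset.sum_congr rfl fun i _ => parseval_aux X (W i) (hWnorm i)
      _ = (d : ℝ) := by simp
  -- the lower chain
  have hlow : ∑ i : Fin d, ∑ r, (X *ᵥ (W i : Fin n → ℝ)) r ^ 2 = ∑ j, lam X j * c j := by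
    calc ∑ i : Fin d, ∑ r, (X *ᵥ (W i : Fin n → ℝ)) r ^ 2
        = ∑ i : Fin d, ∑ j, lam X j * (∑ t, ub X j t * W i t) ^ 2 :=
          Finset.sum_congr rfl fun i _ => key X _
      _ = ∑ j, lam X j * c j := by
          rw [Finset.sum_comm]
          exact Finset.sum_congr rfl fun j _ => by rw [Finset.mul_sum]
  have hσ2 : ∀ j, σ j ^ 2 = lam X (e j) := by
    intro j
    rw [hσ j]
    exact Real.sq_sqrt (lam_nonneg X (e j))
  have hσ0 : ∀ j, 0 ≤ σ j := by
    intro j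
    rw [hσ j]
    exact Real.sqrt_nonneg _
  have hmaj : ∑ j ∈ Finset.Ici (⟨k, hkn⟩ : Fin n), σ j ^ 2 ≤ ∑ j, lam X j * c j := by
    have hre : ∑ j, lam X j * c j = ∑ j, σ j ^ 2 * c (e j) := by
      rw [← Equiv.sum_comp e (fun j => lam X j * c j)]
      exact Finset.sum_congr rfl fun j _ => by rw [hσ2 j]
    rw [hre]
    refine major hkn σ (fun j => c (e j)) hσ0 hanti (fun j => hc0 _) (fun j => hc1 _) ?_ hdk
    rw [Equiv.sum_comp e c]
    exact hcsum
  -- substitute B's kernel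
  have hXM : ∀ i, X *ᵥ (W i : Fin n → ℝ) = M *ᵥ (W i : Fin n → ℝ) := by
    intro i
    rw [hM, Matrix.sub_mulVec, hWK i, sub_zero]
  -- the upper chain
  have hup : ∑ i : Fin d, ∑ r, (M *ᵥ (W i : Fin n → ℝ)) r ^ 2 ≤ ∑ r, ∑ j, M r j ^ 2 := by
    calc ∑ i : Fin d, ∑ r, (M *ᵥ (W i : Fin n → ℝ)) r ^ 2
        = ∑ i : Fin d, ∑ j, lam M j * (∑ t, ub M j t * W i t) ^ 2 :=
          Finset.sum_congr rfl fun i _ => key M _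
      _ = ∑ j, lam M j * ∑ i : Fin d, (∑ t, ub M j t * W i t) ^ 2 := by
          rw [Finset.sum_comm]
          exact Finset.sum_congr rfl fun j _ => by rw [Finset.mul_sum]
      _ ≤ ∑ j, lam M j := by
          refine Finset.sum_le_sum fun j _ => ?_
          exact mul_le_of_le_one_right (lam_nonneg M j)
            (bessel_aux hWo (ub M j) ((ub M).orthonormal.1 j))
      _ = ∑ r, ∑ j, M r j ^ 2 := (frob_eq_sum_lam M).symm
  have hfinal : ∑ j ∈ Finset.Ici (⟨k, hkn⟩ : Fin n), σ j ^ 2 ≤ ∑ r, ∑ j, M r j ^ 2 := by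
    calc ∑ j ∈ Finset.Ici (⟨k, hkn⟩ : Fin n), σ j ^ 2
        ≤ ∑ j, lam X j * c j := hmaj
      _ = ∑ i : Fin d, ∑ r, (X *ᵥ (W i : Fin n → ℝ)) r ^ 2 := hlow.symm
      _ = ∑ i : Fin d, ∑ r, (M *ᵥ (W i : Fin n → ℝ)) r ^ 2 :=
          Finset.sum_congr rfl fun i _ => by rw [hXM i]
      _ ≤ ∑ r, ∑ j, M r j ^ 2 := hup
  rw [frobNorm]
  exact Real.sqrt_le_sqrt hfinal
end

section
/- Let D be an n×n diagonal matrix with positive diagonal entries, let α be a real number, let U ∈ ℝ^{n×k}, let Λ ∈ ℝ^{k×k}, and set = D^{α} U Λ Uᵀ D^{α} and K = Uᵀ D^{-1+2α} U Λ (a k×k matrix). Then for every positive integer T, Σ_{r=1}^{T} (D^{-1} Â)^r D^{-1} = D^{-1+α} U Λ (Σ_{r=1}^{T} K^{r-1}) Uᵀ D^{-1+α}, where K⁰ denotes the k×k identity matrix. -/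
open Matrix

lemma diag_rpow_mul {n : ℕ} (d : Fin n → ℝ) (hd : ∀ i, 0 < d i) (a b : ℝ) :
    Matrix.diagonal (fun i => d i ^ a) * Matrix.diagonal (fun i => d i ^ b) =
      Matrix.diagonal (fun i => d i ^ (a + b)) := by
  rw [Matrix.diagonal_mul_diagonal]
  have : (fun i => d i ^ a * d i ^ b) = fun i => d i ^ (a + b) :=
    funext fun i => (Real.rpow_add (hd i) a b).symm
  rw [this]

lemma netmf_aux {n k : ℕ} (D1 Dα E : Matrix (Fin n) (Fin n) ℝ)
    (U : Matrix (Fin n) (Fin k) ℝ) (Λ K : Matrix (Fin k) (Fin k) ℝ)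
    (h1 : D1 * Dα = E) (h2 : Dα * D1 = E)
    (h3 : Uᵀ * Dα * E * U * Λ = K)
    (r : ℕ) (hr : 1 ≤ r) :
    (D1 * (Dα * U * Λ * Uᵀ * Dα)) ^ r * D1 = E * U * Λ * K ^ (r - 1) * Uᵀ * E := by
  have chunk : ∀ Z : Matrix (Fin k) (Fin n) ℝ,
      Uᵀ * (Dα * (E * (U * (Λ * Z)))) = K * Z := by
    intro Z
    simp only [← Matrix.mul_assoc]
    rw [h3]
  induction r, hr using Nat.le_induction with
  | base =>
    rw [pow_one, Nat.sub_self, pow_zero, Matrix.mul_one]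
    simp only [Matrix.mul_assoc]
    rw [h2, ← Matrix.mul_assoc D1 Dα, h1]
  | succ m hm ih =>
    rw [pow_succ', Matrix.mul_assoc, ih]
    simp only [Matrix.mul_assoc]
    rw [chunk (K ^ (m - 1) * (Uᵀ * E)), ← Matrix.mul_assoc K (K ^ (m-1)),
      ← pow_succ', Nat.sub_add_cancel hm, ← Matrix.mul_assoc D1 Dα, h1,
      Nat.add_sub_cancel]

/-- with `Â = D^α U Λ Uᵀ D^α` and `K = Uᵀ D^{-1+2α} U Λ`,
`Σ_{r=1}^{T} (D⁻¹ Â)ʳ D⁻¹ = D^{-1+α} U Λ (Σ_{r=1}^{T} K^{r-1}) Uᵀ D^{-1+α}`. -/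
theorem netmf_low_rank_power_sum_identity {n k : ℕ}
    (d : Fin n → ℝ) (hd : ∀ i, 0 < d i) (α : ℝ)
    (U : Matrix (Fin n) (Fin k) ℝ) (Λ : Matrix (Fin k) (Fin k) ℝ)
    (Ahat : Matrix (Fin n) (Fin n) ℝ)
    (hAhat : Ahat = Matrix.diagonal (fun i => d i ^ α) * U * Λ * Uᵀ *
        Matrix.diagonal (fun i => d i ^ α))
    (K : Matrix (Fin k) (Fin k) ℝ)
    (hK : K = Uᵀ * Matrix.diagonal (fun i => d i ^ (-(1 : ℝ) + 2 * α)) * U * Λ)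
    (T : ℕ) (hT : 0 < T) :
    ∑ r ∈ Finset.Icc 1 T,
        (Matrix.diagonal (fun i => d i ^ (-(1 : ℝ))) * Ahat) ^ r *
          Matrix.diagonal (fun i => d i ^ (-(1 : ℝ))) =
      Matrix.diagonal (fun i => d i ^ (-(1 : ℝ) + α)) * U * Λ *
        (∑ r ∈ Finset.Icc 1 T, K ^ (r - 1)) * Uᵀ *
        Matrix.diagonal (fun i => d i ^ (-(1 : ℝ) + α)) := by
  set D1 := Matrix.diagonal (fun i => d i ^ (-(1 : ℝ))) with hD1
  set Dα := Matrix.diagonal (fun i => d i ^ α) with hDα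
  set E := Matrix.diagonal (fun i => d i ^ (-(1 : ℝ) + α)) with hE
  have h1 : D1 * Dα = E := by rw [hD1, hDα, hE, diag_rpow_mul d hd]
  have h2 : Dα * D1 = E := by
    rw [hD1, hDα, hE, diag_rpow_mul d hd]
    congr 1; funext i; congr 1; ring
  have h3 : Uᵀ * Dα * E * U * Λ = K := by
    rw [Matrix.mul_assoc Uᵀ Dα E, hDα, hE, diag_rpow_mul d hd, hK]
    congr 3
    funext i; congr 1; ring
  have key : ∀ r ∈ Finset.Icc 1 T,
      (D1 * Ahat) ^ r * D1 = E * U * Λ * K ^ (r - 1) * Uᵀ * E := by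
    intro r hr
    rw [hAhat]
    exact netmf_aux D1 Dα E U Λ K h1 h2 h3 r (Finset.mem_Icc.mp hr).1
  rw [Finset.sum_congr rfl key]
  simp only [Matrix.mul_sum, Matrix.sum_mul]
end

section
/- Let Q ∈ ℝ^{n×l} have orthonormal columns (QᵀQ = I_l), let S ∈ ℝ^{l×l}, let X = Q S Qᵀ, let Π ∈ ℝ^{n×h} be any matrix, and let Z = Πᵀ X Π be the sketch of X. If G ∈ ℝ^{l×h} is any left inverse of ΠᵀQ, i.e. G (ΠᵀQ) = I_l, then G Z Gᵀ = S. Consequently, the core matrix S of the single-pass approximation X = Q S Qᵀ is exactly recovered from the sketch Z whenever ΠᵀQ has full column rank. -/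
open Matrix

/-- the core matrix `S` of the single-pass approximation
`X = Q S Qᵀ` is exactly recovered from the sketch `Z = Πᵀ X Π` by any left
inverse `G` of `Πᵀ Q`. -/
theorem single_pass_core_recovery {n l h : ℕ}
    (Q : Matrix (Fin n) (Fin l) ℝ) (hQ : Qᵀ * Q = 1)
    (S : Matrix (Fin l) (Fin l) ℝ)
    (X : Matrix (Fin n) (Fin n) ℝ) (hX : X = Q * S * Qᵀ)
    (P : Matrix (Fin n) (Fin h) ℝ)
    (Z : Matrix (Fin h) (Fin h) ℝ) (hZ : Z = Pᵀ * X * P)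
    (G : Matrix (Fin l) (Fin h) ℝ) (hG : G * (Pᵀ * Q) = 1) :
    G * Z * Gᵀ = S := by
  have h2 : Qᵀ * P * Gᵀ = 1 := by
    have := congrArg Matrix.transpose hG
    simpa [Matrix.transpose_mul, Matrix.mul_assoc] using this
  subst hX hZ
  calc G * (Pᵀ * (Q * S * Qᵀ) * P) * Gᵀ
      = (G * (Pᵀ * Q)) * S * (Qᵀ * P * Gᵀ) := by
        simp only [Matrix.mul_assoc]
    _ = S := by rw [hG, h2, Matrix.one_mul, Matrix.mul_one]
end

section
/- Let X be an n×n real symmetric matrix whose eigenvalues, ordered by decreasing absolute value, are λ_1, λ_2, …, λ_n with |λ_1| ≥ |λ_2| ≥ … ≥ |λ_n|. Then for every k < n, the best rank-k Frobenius-norm approximation error of X satisfies: for every n×n real matrix B of rank at most k, ‖X − B‖_F ≥ √(Σ_{j=k+1}^{n} |λ_j|²), and this bound is attained by the truncated eigen-decomposition X_k = Σ_{j=1}^{k} λ_j u_j u_jᵀ, where u_1,…,u_n is an orthonormal eigenbasis of X ordered so that X u_j = λ_j u_j; i.e., ‖X − X_k‖_F = √(Σ_{j=k+1}^{n} |λ_j|²).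 -/
open Matrix

lemma aux_L0 {N : ℕ} {ι : Type*} [Fintype ι] [DecidableEq ι] (w : ι → Fin N → ℝ)
    (hw : ∀ i j, w i ⬝ᵥ w j = if i = j then (1:ℝ) else 0)
    (S : Finset ι) (c : ι → ℝ) :
    ∑ a, (∑ i ∈ S, c i * w i a) ^ 2 = ∑ i ∈ S, c i ^ 2 := by
  have hdot : ∀ i j, (∑ a, w i a * w j a) = if i = j then (1:ℝ) else 0 := by
    intro i j; simpa [dotProduct] using hw i j
  calc ∑ a, (∑ i ∈ S, c i * w i a) ^ 2
      = ∑ a, ∑ i ∈ S, ∑ i' ∈ S, (c i * c i') * (w i a * w i' a) := by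
        refine Finset.sum_congr rfl fun a _ => ?_
        rw [sq, Finset.sum_mul_sum]
        exact Finset.sum_congr rfl fun i _ =>
          Finset.sum_congr rfl fun i' _ => by ring
    _ = ∑ i ∈ S, ∑ i' ∈ S, (c i * c i') * ∑ a, (w i a * w i' a) := by
        rw [Finset.sum_comm]
        refine Finset.sum_congr rfl fun i _ => ?_
        rw [Finset.sum_comm]
        exact Finset.sum_congr rfl fun i' _ => (Finset.mul_sum _ _ _).symm
    _ = ∑ i ∈ S, c i ^ 2 := by
        refine Finset.sum_congr rfl fun i hi => ?_
        simp_rw [hdot]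
        simp [Finset.sum_ite_eq, hi, sq]

lemma aux_decomp {N : ℕ} (u : Fin N → Fin N → ℝ)
    (hcol : ∀ a b, (∑ j, u j a * u j b) = if a = b then (1:ℝ) else 0)
    (Y : Matrix (Fin N) (Fin N) ℝ) (mu : Fin N → ℝ)
    (h : ∀ j, Y *ᵥ u j = mu j • u j) (a b : Fin N) :
    Y a b = ∑ j, mu j * (u j a * u j b) := by
  have hmv : ∀ j, (∑ c, Y a c * u j c) = mu j * u j a := by
    intro j
    have := congrFun (h j) a
    simpa [Matrix.mulVec, dotProduct] using this
  calc Y a b = ∑ c, Y a c * (if c = b then (1:ℝ) else 0) := by simp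
    _ = ∑ c, Y a c * ∑ j, u j c * u j b := by
        refine Finset.sum_congr rfl fun c _ => ?_; rw [hcol]
    _ = ∑ c, ∑ j, Y a c * u j c * u j b := by
        refine Finset.sum_congr rfl fun c _ => ?_
        rw [Finset.mul_sum]; exact Finset.sum_congr rfl fun j _ => by ring
    _ = ∑ j, ∑ c, Y a c * u j c * u j b := Finset.sum_comm
    _ = ∑ j, mu j * (u j a * u j b) := by
        refine Finset.sum_congr rfl fun j _ => ?_
        rw [← Finset.sum_mul, hmv]; ring

lemma aux_col {N : ℕ} (u : Fin N → Fin N → ℝ)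
    (hortho : ∀ i j, u i ⬝ᵥ u j = if i = j then (1 : ℝ) else 0) :
    ∀ a b, (∑ j, u j a * u j b) = if a = b then (1:ℝ) else 0 := by
  intro a b
  set U : Matrix (Fin N) (Fin N) ℝ := Matrix.of u with hUdef
  have hU : U * Uᵀ = 1 := by
    ext i j
    simp only [Matrix.mul_apply, Matrix.transpose_apply, Matrix.one_apply, hUdef,
      Matrix.of_apply]
    simpa [dotProduct] using hortho i j
  have hU2 : Uᵀ * U = 1 := mul_eq_one_comm.mp hU
  have := congrFun (congrFun hU2 a) b
  simpa [Matrix.mul_apply, Matrix.transpose_apply, Matrix.one_apply, hUdef] using this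

theorem exists_onb_ker {n k : ℕ} (B : Matrix (Fin n) (Fin n) ℝ) (hB : B.rank ≤ k) :
    ∃ v : Fin (n - k) → (Fin n → ℝ),
      (∀ i j, v i ⬝ᵥ v j = if i = j then (1:ℝ) else 0) ∧ (∀ i, B *ᵥ v i = 0) := by
  classical
  let L := WithLp.linearEquiv 2 ℝ (Fin n → ℝ)
  let K : Submodule ℝ (EuclideanSpace ℝ (Fin n)) := LinearMap.ker (B.mulVecLin ∘ₗ L.toLinearMap)
  have hdim : n - k ≤ Module.finrank ℝ K := by
    have h1 := LinearMap.finrank_range_add_finrank_ker (B.mulVecLin ∘ₗ L.toLinearMap)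
    have hrange : LinearMap.range (B.mulVecLin ∘ₗ L.toLinearMap) = LinearMap.range B.mulVecLin := by
      rw [LinearMap.range_comp, LinearEquiv.range, Submodule.map_top]
    rw [hrange] at h1
    have h3 : Module.finrank ℝ (LinearMap.range B.mulVecLin) = B.rank := rfl
    rw [h3] at h1
    have h2 : Module.finrank ℝ (WithLp 2 (Fin n → ℝ)) = n := by
      have : Module.finrank ℝ (EuclideanSpace ℝ (Fin n)) = n := by simp
      exact this
    have h4 := h1.trans h2
    show n - k ≤ Module.finrank ℝ (LinearMap.ker (B.mulVecLin ∘ₗ L.toLinearMap))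
    omega
  let ob := stdOrthonormalBasis ℝ K
  let v : Fin (n - k) → EuclideanSpace ℝ (Fin n) := fun i => (ob (Fin.castLE hdim i) : K)
  refine ⟨fun i => WithLp.equiv 2 _ (v i), ?_, ?_⟩
  · intro i j
    have horm := ob.orthonormal
    rw [orthonormal_iff_ite] at horm
    have h := horm (Fin.castLE hdim i) (Fin.castLE hdim j)
    rw [Submodule.coe_inner] at h
    have hinner : (inner ℝ (v i) (v j) : ℝ)
        = (WithLp.equiv 2 _ (v i)) ⬝ᵥ (WithLp.equiv 2 _ (v j)) := by
      rw [EuclideanSpace.inner_eq_star_dotProduct, dotProduct_comm]; rfl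
    rw [← hinner, h]
    have hcast : (Fin.castLE hdim i = Fin.castLE hdim j) ↔ i = j := by
      constructor
      · intro hh; have hv := congrArg Fin.val hh; exact Fin.ext hv
      · rintro rfl; rfl
    simp [hcast]
  · intro i
    have hm : v i ∈ K := (ob (Fin.castLE hdim i)).2
    exact hm

lemma aux_sumSq_trace {N : ℕ} (M : Matrix (Fin N) (Fin N) ℝ) :
    (∑ a, ∑ b, M a b ^ 2) = Matrix.trace (Mᵀ * M) := by
  unfold Matrix.trace
  simp only [Matrix.diag_apply, Matrix.mul_apply, Matrix.transpose_apply]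
  rw [Finset.sum_comm]
  exact Finset.sum_congr rfl fun a _ => Finset.sum_congr rfl fun b _ => by ring

lemma aux_pyth {N : ℕ} (M P : Matrix (Fin N) (Fin N) ℝ)
    (hPt : Pᵀ = P) (hPP : P * P = P) :
    (∑ a, ∑ b, (M * P) a b ^ 2) ≤ ∑ a, ∑ b, M a b ^ 2 := by
  set Q : Matrix (Fin N) (Fin N) ℝ := 1 - P with hQdef
  have hQt : Qᵀ = Q := by rw [hQdef, Matrix.transpose_sub, Matrix.transpose_one, hPt]
  have hPQ : P + Q = 1 := by rw [hQdef]; abel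
  have h1 : (M * P)ᵀ * (M * P) = P * (Mᵀ * M) * P := by
    rw [Matrix.transpose_mul, hPt]; noncomm_ring
  have hQQ : Q * Q = Q := by
    rw [hQdef, Matrix.sub_mul, Matrix.mul_sub, Matrix.mul_sub, hPP]
    simp
  have h2 : (M * Q)ᵀ * (M * Q) = Q * (Mᵀ * M) * Q := by
    rw [Matrix.transpose_mul, hQt]; noncomm_ring
  have t1 : Matrix.trace (P * (Mᵀ * M) * P) = Matrix.trace (P * (Mᵀ * M)) := by
    rw [Matrix.trace_mul_cycle, ← Matrix.mul_assoc, hPP, Matrix.mul_assoc]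
  have t2 : Matrix.trace (Q * (Mᵀ * M) * Q) = Matrix.trace (Q * (Mᵀ * M)) := by
    rw [Matrix.trace_mul_cycle, ← Matrix.mul_assoc, hQQ, Matrix.mul_assoc]
  have key : (∑ a, ∑ b, M a b ^ 2)
      = (∑ a, ∑ b, (M * P) a b ^ 2) + (∑ a, ∑ b, (M * Q) a b ^ 2) := by
    rw [aux_sumSq_trace, aux_sumSq_trace, aux_sumSq_trace, h1, h2, t1, t2,
      ← Matrix.trace_add, ← Matrix.add_mul, hPQ, Matrix.one_mul]
  have hnn : 0 ≤ ∑ a, ∑ b, (M * Q) a b ^ 2 :=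
    Finset.sum_nonneg fun a _ => Finset.sum_nonneg fun b _ => sq_nonneg _
  linarith

/-- for symmetric `X` with eigenvalues ordered by decreasing absolute
value, every rank-`≤ k` matrix `B` satisfies `‖X − B‖_F ≥ √(Σ_{j>k} |λⱼ|²)`, and the
bound is attained by the truncated eigen-decomposition `X_k = Σ_{j≤k} λⱼ uⱼ uⱼᵀ`.
(Indices are 0-based: the first `k` indices form `X_k`, the tail is `j ≥ k`.) -/
theorem best_rank_k_symmetric_truncated_eig {n k : ℕ} (hk : k < n)
    (X : Matrix (Fin n) (Fin n) ℝ) (hX : X.IsHermitian)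
    (lam : Fin n → ℝ) (e : Fin n ≃ Fin n)
    (hlam : ∀ i, lam i = hX.eigenvalues (e i))
    (hord : Antitone fun i => |lam i|)
    (u : Fin n → Fin n → ℝ)
    (hortho : ∀ i j, u i ⬝ᵥ u j = if i = j then (1 : ℝ) else 0)
    (heig : ∀ j, X *ᵥ u j = lam j • u j) :
    (∀ B : Matrix (Fin n) (Fin n) ℝ, B.rank ≤ k →
      Real.sqrt (∑ j ∈ Finset.Ici (⟨k, hk⟩ : Fin n), |lam j| ^ 2) ≤ frobNorm (X - B)) ∧
    frobNorm (X - ∑ j ∈ Finset.Iio (⟨k, hk⟩ : Fin n), lam j • Matrix.vecMulVec (u j) (u j)) =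
      Real.sqrt (∑ j ∈ Finset.Ici (⟨k, hk⟩ : Fin n), |lam j| ^ 2) := by
  classical
  set κ : Fin n := ⟨k, hk⟩ with hκdef
  have hcol := aux_col u hortho
  have hXentry : ∀ a b, X a b = ∑ j, lam j * (u j a * u j b) :=
    aux_decomp u hcol X lam heig
  have huu : ∀ j, (∑ a, u j a * u j a) = 1 := by
    intro j; have := hortho j j; simpa [dotProduct] using this
  have habs : (∑ j ∈ Finset.Ici κ, |lam j| ^ 2) = ∑ j ∈ Finset.Ici κ, lam j ^ 2 :=
    Finset.sum_congr rfl fun j _ => sq_abs _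
  have hsplitR : ∀ (f : Fin n → ℝ),
      (∑ j, f j) = (∑ j ∈ Finset.Iio κ, f j) + (∑ j ∈ Finset.Ici κ, f j) := by
    intro f
    rw [← Finset.sum_union]
    · congr 1
      ext x
      simp [lt_or_ge x κ, Finset.mem_union]
    · intro s hs1 hs2 x hx
      have h1 := hs1 hx
      have h2 := hs2 hx
      simp only [Finset.mem_Iio] at h1
      simp only [Finset.mem_Ici] at h2
      exact absurd h1 (not_lt.mpr h2)
  constructor
  · -- lower bound
    intro B hB
    obtain ⟨v, hvortho, hvker⟩ := exists_onb_ker B hB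
    set P : Matrix (Fin n) (Fin n) ℝ := Matrix.of (fun a b => ∑ i, v i a * v i b) with hPdef
    have hvdot : ∀ i i', (∑ a, v i a * v i' a) = if i = i' then (1:ℝ) else 0 := by
      intro i i'; simpa [dotProduct] using hvortho i i'
    have hPt : Pᵀ = P := by
      ext a b
      simp only [Matrix.transpose_apply, hPdef, Matrix.of_apply]
      exact Finset.sum_congr rfl fun i _ => by ring
    have hPP : P * P = P := by
      ext a b
      simp only [Matrix.mul_apply, hPdef, Matrix.of_apply]
      calc ∑ c, (∑ i, v i a * v i c) * (∑ i', v i' c * v i' b)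
          = ∑ c, ∑ i, ∑ i', (v i a * v i' b) * (v i c * v i' c) := by
            refine Finset.sum_congr rfl fun c _ => ?_
            rw [Finset.sum_mul_sum]
            exact Finset.sum_congr rfl fun i _ =>
              Finset.sum_congr rfl fun i' _ => by ring
        _ = ∑ i, ∑ i', (v i a * v i' b) * ∑ c, (v i c * v i' c) := by
            rw [Finset.sum_comm]
            refine Finset.sum_congr rfl fun i _ => ?_
            rw [Finset.sum_comm]
            exact Finset.sum_congr rfl fun i' _ => (Finset.mul_sum _ _ _).symm
        _ = ∑ i, v i a * v i b := by
            refine Finset.sum_congr rfl fun i _ => ?_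
            simp_rw [hvdot]
            simp [Finset.sum_ite_eq]
    have hBP : B * P = 0 := by
      ext a b
      simp only [Matrix.mul_apply, hPdef, Matrix.of_apply, Matrix.zero_apply]
      have hz : ∀ i, (∑ c, B a c * v i c) = 0 := by
        intro i
        have := congrFun (hvker i) a
        simpa [Matrix.mulVec, dotProduct] using this
      calc ∑ c, B a c * ∑ i, v i c * v i b
          = ∑ c, ∑ i, B a c * v i c * v i b := by
            refine Finset.sum_congr rfl fun c _ => ?_
            rw [Finset.mul_sum]; exact Finset.sum_congr rfl fun i _ => by ring
        _ = ∑ i, (∑ c, B a c * v i c) * v i b := by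
            rw [Finset.sum_comm]
            exact Finset.sum_congr rfl fun i _ => (Finset.sum_mul _ _ _).symm
        _ = 0 := by simp [hz]
    have hXBP : (X - B) * P = X * P := by rw [Matrix.sub_mul, hBP, sub_zero]
    have hXP : ∀ a b, (X * P) a b = ∑ i, (X *ᵥ v i) a * v i b := by
      intro a b
      simp only [Matrix.mul_apply, hPdef, Matrix.of_apply]
      calc ∑ c, X a c * ∑ i, v i c * v i b
          = ∑ c, ∑ i, X a c * v i c * v i b := by
            refine Finset.sum_congr rfl fun c _ => ?_
            rw [Finset.mul_sum]; exact Finset.sum_congr rfl fun i _ => by ring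
        _ = ∑ i, (∑ c, X a c * v i c) * v i b := by
            rw [Finset.sum_comm]
            exact Finset.sum_congr rfl fun i _ => (Finset.sum_mul _ _ _).symm
        _ = ∑ i, (X *ᵥ v i) a * v i b := by
            refine Finset.sum_congr rfl fun i _ => ?_
            simp [Matrix.mulVec, dotProduct]
    set q : Fin n → ℝ := fun j => ∑ i, (u j ⬝ᵥ v i) ^ 2 with hqdef
    have hXv : ∀ (x : Fin n → ℝ) (a : Fin n),
        (X *ᵥ x) a = ∑ j, (lam j * (u j ⬝ᵥ x)) * u j a := by
      intro x a
      simp only [Matrix.mulVec, dotProduct]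
      calc ∑ b, X a b * x b
          = ∑ b, (∑ j, lam j * (u j a * u j b)) * x b := by
            refine Finset.sum_congr rfl fun b _ => ?_; rw [← hXentry a b]
        _ = ∑ b, ∑ j, lam j * (u j a * u j b) * x b := by
            refine Finset.sum_congr rfl fun b _ => ?_; rw [Finset.sum_mul]
        _ = ∑ j, ∑ b, lam j * (u j a * u j b) * x b := Finset.sum_comm
        _ = ∑ j, (lam j * ∑ b, u j b * x b) * u j a := by
            refine Finset.sum_congr rfl fun j _ => ?_
            have hterm : ∀ b, lam j * (u j a * u j b) * x b
                = lam j * (u j b * x b) * u j a := fun b => by ring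
            simp_rw [hterm]
            rw [← Finset.sum_mul, ← Finset.mul_sum]
    have hnormXv : ∀ (x : Fin n → ℝ),
        (∑ a, ((X *ᵥ x) a) ^ 2) = ∑ j, lam j ^ 2 * (u j ⬝ᵥ x) ^ 2 := by
      intro x
      have hL0 := aux_L0 u hortho Finset.univ (fun j => lam j * (u j ⬝ᵥ x))
      calc ∑ a, ((X *ᵥ x) a) ^ 2
          = ∑ a, (∑ j, (lam j * (u j ⬝ᵥ x)) * u j a) ^ 2 := by
            refine Finset.sum_congr rfl fun a _ => ?_; rw [hXv x a]
        _ = ∑ j, (lam j * (u j ⬝ᵥ x)) ^ 2 := hL0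
        _ = ∑ j, lam j ^ 2 * (u j ⬝ᵥ x) ^ 2 :=
            Finset.sum_congr rfl fun j _ => by ring
    have hsumSqXP : (∑ a, ∑ b, (X * P) a b ^ 2) = ∑ j, lam j ^ 2 * q j := by
      calc ∑ a, ∑ b, (X * P) a b ^ 2
          = ∑ a, ∑ b, (∑ i, (X *ᵥ v i) a * v i b) ^ 2 :=
            Finset.sum_congr rfl fun a _ => Finset.sum_congr rfl fun b _ => by rw [hXP]
        _ = ∑ a, ∑ i, ((X *ᵥ v i) a) ^ 2 :=
            Finset.sum_congr rfl fun a _ =>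
              aux_L0 v hvortho Finset.univ (fun i => (X *ᵥ v i) a)
        _ = ∑ i, ∑ a, ((X *ᵥ v i) a) ^ 2 := Finset.sum_comm
        _ = ∑ i, ∑ j, lam j ^ 2 * (u j ⬝ᵥ v i) ^ 2 :=
            Finset.sum_congr rfl fun i _ => hnormXv (v i)
        _ = ∑ j, ∑ i, lam j ^ 2 * (u j ⬝ᵥ v i) ^ 2 := Finset.sum_comm
        _ = ∑ j, lam j ^ 2 * q j := by
            refine Finset.sum_congr rfl fun j _ => ?_
            rw [hqdef]; rw [Finset.mul_sum]
    have hq0 : ∀ j, 0 ≤ q j := fun j => Finset.sum_nonneg fun i _ => sq_nonneg _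
    have hParseval : ∀ (x : Fin n → ℝ), (∑ j, (u j ⬝ᵥ x) ^ 2) = ∑ a, x a ^ 2 := by
      intro x
      have hcort : ∀ a b, (fun j => u j a) ⬝ᵥ (fun j => u j b)
          = if a = b then (1:ℝ) else 0 := by
        intro a b; simpa [dotProduct] using hcol a b
      have hL0 := aux_L0 (fun a j => u j a) hcort Finset.univ x
      calc ∑ j, (u j ⬝ᵥ x) ^ 2
          = ∑ j, (∑ a, x a * u j a) ^ 2 := by
            refine Finset.sum_congr rfl fun j _ => ?_
            congr 1
            simp only [dotProduct]
            exact Finset.sum_congr rfl fun a _ => mul_comm _ _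
        _ = ∑ a, x a ^ 2 := hL0
    have hqsum : (∑ j, q j) = ((n - k : ℕ) : ℝ) := by
      rw [hqdef]
      rw [Finset.sum_comm]
      have hone : ∀ i, (∑ j, (u j ⬝ᵥ v i) ^ 2) = 1 := by
        intro i
        rw [hParseval (v i)]
        have hv := hvdot i i
        rw [if_pos rfl] at hv
        rw [← hv]
        exact Finset.sum_congr rfl fun a _ => pow_two (v i a)
      rw [Finset.sum_congr rfl fun i _ => hone i]
      simp
    have hq1 : ∀ j, q j ≤ 1 := by
      intro j
      set c : Fin (n - k) → ℝ := fun i => u j ⬝ᵥ v i with hcdef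
      set w : Fin n → ℝ := fun a => u j a - ∑ i, c i * v i a with hwdef
      have hww : 0 ≤ ∑ a, w a ^ 2 := Finset.sum_nonneg fun a _ => sq_nonneg _
      have t1 : (∑ a, u j a ^ 2) = 1 := by
        rw [← huu j]; exact Finset.sum_congr rfl fun a _ => sq (u j a)
      have t3 : (∑ a, (∑ i, c i * v i a) ^ 2) = ∑ i, c i ^ 2 :=
        aux_L0 v hvortho Finset.univ c
      have t2 : (∑ a, u j a * ∑ i, c i * v i a) = ∑ i, c i ^ 2 := by
        calc ∑ a, u j a * ∑ i, c i * v i a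
            = ∑ a, ∑ i, c i * (u j a * v i a) := by
              refine Finset.sum_congr rfl fun a _ => ?_
              rw [Finset.mul_sum]; exact Finset.sum_congr rfl fun i _ => by ring
          _ = ∑ i, ∑ a, c i * (u j a * v i a) := Finset.sum_comm
          _ = ∑ i, c i * ∑ a, u j a * v i a :=
              Finset.sum_congr rfl fun i _ => (Finset.mul_sum _ _ _).symm
          _ = ∑ i, c i ^ 2 := by
              refine Finset.sum_congr rfl fun i _ => ?_
              have : (∑ a, u j a * v i a) = c i := by
                rw [hcdef]; simp [dotProduct]
              rw [this, sq]
      have hexpand : (∑ a, w a ^ 2)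
          = (∑ a, u j a ^ 2) - 2 * (∑ a, u j a * ∑ i, c i * v i a)
            + ∑ a, (∑ i, c i * v i a) ^ 2 := by
        rw [Finset.mul_sum, ← Finset.sum_sub_distrib, ← Finset.sum_add_distrib]
        refine Finset.sum_congr rfl fun a _ => ?_
        rw [hwdef]; ring
      have hqc : q j = ∑ i, c i ^ 2 := by rw [hqdef, hcdef]
      rw [hexpand, t1, t2, t3, ← hqc] at hww
      linarith
    -- combinatorial inequality
    have hcard : (Finset.Ici κ).card = n - k := by
      rw [Fin.card_Ici]
    have hIciq : (∑ j ∈ Finset.Ici κ, (1 - q j)) = ∑ j ∈ Finset.Iio κ, q j := by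
      have h1 : (∑ j ∈ Finset.Ici κ, (1 - q j))
          = ((n - k : ℕ) : ℝ) - ∑ j ∈ Finset.Ici κ, q j := by
        rw [Finset.sum_sub_distrib, Finset.sum_const, hcard]
        simp
      have h2 := hsplitR q
      rw [hqsum] at h2
      linarith
    have hbound1 : ∀ j ∈ Finset.Ici κ, lam j ^ 2 ≤ lam κ ^ 2 := by
      intro j hj
      have hle : κ ≤ j := Finset.mem_Ici.mp hj
      have h := hord hle
      calc lam j ^ 2 = |lam j| ^ 2 := (sq_abs _).symm
        _ ≤ |lam κ| ^ 2 := pow_le_pow_left₀ (abs_nonneg _) h 2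
        _ = lam κ ^ 2 := sq_abs _
    have hbound2 : ∀ j ∈ Finset.Iio κ, lam κ ^ 2 ≤ lam j ^ 2 := by
      intro j hj
      have hle : j ≤ κ := le_of_lt (Finset.mem_Iio.mp hj)
      have h := hord hle
      calc lam κ ^ 2 = |lam κ| ^ 2 := (sq_abs _).symm
        _ ≤ |lam j| ^ 2 := pow_le_pow_left₀ (abs_nonneg _) h 2
        _ = lam j ^ 2 := sq_abs _
    have e1 : (∑ j ∈ Finset.Ici κ, lam j ^ 2 * (1 - q j))
        ≤ ∑ j ∈ Finset.Ici κ, lam κ ^ 2 * (1 - q j) := by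
      refine Finset.sum_le_sum fun j hj => ?_
      exact mul_le_mul_of_nonneg_right (hbound1 j hj) (by linarith [hq1 j])
    have e2 : (∑ j ∈ Finset.Iio κ, lam κ ^ 2 * q j)
        ≤ ∑ j ∈ Finset.Iio κ, lam j ^ 2 * q j := by
      refine Finset.sum_le_sum fun j hj => ?_
      exact mul_le_mul_of_nonneg_right (hbound2 j hj) (hq0 j)
    have e3 : (∑ j ∈ Finset.Ici κ, lam κ ^ 2 * (1 - q j))
        = ∑ j ∈ Finset.Iio κ, lam κ ^ 2 * q j := by
      rw [← Finset.mul_sum, ← Finset.mul_sum, hIciq]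
    have e4 : (∑ j ∈ Finset.Ici κ, lam j ^ 2)
        = (∑ j ∈ Finset.Ici κ, lam j ^ 2 * q j)
          + ∑ j ∈ Finset.Ici κ, lam j ^ 2 * (1 - q j) := by
      rw [← Finset.sum_add_distrib]
      exact Finset.sum_congr rfl fun j _ => by ring
    have e5 := hsplitR (fun j => lam j ^ 2 * q j)
    have main_ineq : (∑ j ∈ Finset.Ici κ, lam j ^ 2) ≤ ∑ a, ∑ b, (X - B) a b ^ 2 := by
      have s1 : (∑ a, ∑ b, (X * P) a b ^ 2) ≤ ∑ a, ∑ b, (X - B) a b ^ 2 := by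
        have := aux_pyth (X - B) P hPt hPP
        rwa [hXBP] at this
      rw [hsumSqXP] at s1
      linarith
    rw [habs]
    unfold frobNorm
    exact Real.sqrt_le_sqrt main_ineq
  · -- equality part
    have hdiff : ∀ a b,
        (X - ∑ j ∈ Finset.Iio κ, lam j • Matrix.vecMulVec (u j) (u j)) a b
          = ∑ j ∈ Finset.Ici κ, (lam j * u j a) * u j b := by
      intro a b
      have h1 : (∑ j ∈ Finset.Iio κ, lam j • Matrix.vecMulVec (u j) (u j)) a b
          = ∑ j ∈ Finset.Iio κ, lam j * (u j a * u j b) := by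
        simp [Matrix.sum_apply, Matrix.vecMulVec_apply]
      rw [Matrix.sub_apply, h1, hXentry a b, hsplitR (fun j => lam j * (u j a * u j b))]
      rw [add_sub_cancel_left]
      exact Finset.sum_congr rfl fun j _ => by ring
    unfold frobNorm
    congr 1
    calc ∑ a, ∑ b, (X - ∑ j ∈ Finset.Iio κ, lam j • Matrix.vecMulVec (u j) (u j)) a b ^ 2
        = ∑ a, ∑ b, (∑ j ∈ Finset.Ici κ, (lam j * u j a) * u j b) ^ 2 :=
          Finset.sum_congr rfl fun a _ => Finset.sum_congr rfl fun b _ => by rw [hdiff]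
      _ = ∑ a, ∑ j ∈ Finset.Ici κ, (lam j * u j a) ^ 2 :=
          Finset.sum_congr rfl fun a _ =>
            aux_L0 u hortho (Finset.Ici κ) (fun j => lam j * u j a)
      _ = ∑ j ∈ Finset.Ici κ, ∑ a, (lam j * u j a) ^ 2 := Finset.sum_comm
      _ = ∑ j ∈ Finset.Ici κ, lam j ^ 2 * ∑ a, u j a * u j a := by
          refine Finset.sum_congr rfl fun j _ => ?_
          rw [Finset.mul_sum]
          exact Finset.sum_congr rfl fun a _ => by ring
      _ = ∑ j ∈ Finset.Ici κ, |lam j| ^ 2 := by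
          refine Finset.sum_congr rfl fun j _ => ?_
          rw [huu j, sq_abs]; ring
end

section
/- Let X be an n×n real symmetric matrix, let Q ∈ ℝ^{n×l} have orthonormal columns, and let S = Qᵀ X Q with eigen-decomposition S = W Λ Wᵀ (W orthogonal, Λ diagonal). Then the approximate eigenpairs (U, Λ) with U = Q W satisfy ‖X − U Λ Uᵀ‖_F ≤ 2‖X − Q Qᵀ X‖_F; that is, the eigen-decomposition error of the randomized symmetric approximation is controlled by twice the range-approximation (projection) error of Q. -/
open Matrix
attribute [local instance] Matrix.frobeniusNormedAddCommGroup

lemma frob_eq_norm {m n : ℕ} (M : Matrix (Fin m) (Fin n) ℝ) : frobNorm M = ‖M‖ := by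
  rw [frobNorm, frobenius_norm_def, Real.sqrt_eq_rpow]
  congr 1
  simp [Real.norm_eq_abs, sq_abs]

lemma frob_eq_sqrt_trace {m n : ℕ} (M : Matrix (Fin m) (Fin n) ℝ) :
    frobNorm M = Real.sqrt ((M * Mᵀ).trace) := by
  rw [frobNorm]
  congr 1
  simp [Matrix.trace, Matrix.mul_apply, Matrix.diag, sq]

lemma trace_self_nonneg {m n : ℕ} (M : Matrix (Fin m) (Fin n) ℝ) :
    0 ≤ (M * Mᵀ).trace := by
  have : (M * Mᵀ).trace = ∑ i, ∑ j, M i j ^ 2 := by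
    simp [Matrix.trace, Matrix.mul_apply, Matrix.diag, sq]
  rw [this]
  positivity

/-- left multiplication by a matrix with orthonormal columns preserves frobNorm -/
lemma frob_mul_left {m l : ℕ} (Q : Matrix (Fin m) (Fin l) ℝ) (hQ : Qᵀ * Q = 1)
    {k : ℕ} (A : Matrix (Fin l) (Fin k) ℝ) : frobNorm (Q * A) = frobNorm A := by
  rw [frob_eq_sqrt_trace, frob_eq_sqrt_trace]
  congr 1
  rw [transpose_mul]
  have : Q * A * (Aᵀ * Qᵀ) = Q * (A * Aᵀ * Qᵀ) := by
    simp [Matrix.mul_assoc]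
  rw [this, trace_mul_comm]
  rw [Matrix.mul_assoc, Matrix.mul_assoc, hQ, Matrix.mul_one, trace_mul_comm]

lemma frob_transpose {m n : ℕ} (M : Matrix (Fin m) (Fin n) ℝ) :
    frobNorm Mᵀ = frobNorm M := by
  rw [frob_eq_sqrt_trace, frob_eq_sqrt_trace, transpose_transpose, trace_mul_comm]

lemma frob_mul_right {m l : ℕ} (Q : Matrix (Fin m) (Fin l) ℝ) (hQ : Qᵀ * Q = 1)
    {k : ℕ} (E : Matrix (Fin k) (Fin m) ℝ) : frobNorm (E * Q) ≤ frobNorm E := by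
  rw [frob_eq_sqrt_trace, frob_eq_sqrt_trace]
  apply Real.sqrt_le_sqrt
  have hQ' : ∀ {k : ℕ} (M : Matrix (Fin l) (Fin k) ℝ), Qᵀ * (Q * M) = M := by
    intro k M; rw [← Matrix.mul_assoc, hQ, Matrix.one_mul]
  have key : E * Eᵀ = (E * Q) * (E * Q)ᵀ + (E - E * (Q * Qᵀ)) * (E - E * (Q * Qᵀ))ᵀ := by
    simp only [transpose_mul, transpose_sub, transpose_transpose,
      Matrix.mul_sub, Matrix.sub_mul, Matrix.mul_assoc, hQ']
    abel
  calc ((E * Q) * (E * Q)ᵀ).trace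
      ≤ ((E * Q) * (E * Q)ᵀ).trace + ((E - E * (Q * Qᵀ)) * (E - E * (Q * Qᵀ))ᵀ).trace := by
        linarith [trace_self_nonneg (E - E * (Q * Qᵀ))]
    _ = (E * Eᵀ).trace := by rw [key, trace_add]

/-- with `S = Qᵀ X Q = W Λ Wᵀ` and `U = Q W`, the error of the
approximate eigenpairs satisfies `‖X − U Λ Uᵀ‖_F ≤ 2 ‖X − Q Qᵀ X‖_F`. -/
theorem randomized_symmetric_eig_error_bound {n l : ℕ}
    (X : Matrix (Fin n) (Fin n) ℝ) (hX : X.IsSymm)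
    (Q : Matrix (Fin n) (Fin l) ℝ) (hQ : Qᵀ * Q = 1)
    (S : Matrix (Fin l) (Fin l) ℝ) (hS : S = Qᵀ * X * Q)
    (W Λ : Matrix (Fin l) (Fin l) ℝ)
    (hW1 : Wᵀ * W = 1) (hW2 : W * Wᵀ = 1)
    (hΛ : Λ.IsDiag)
    (hdecomp : S = W * Λ * Wᵀ) :
    frobNorm (X - (Q * W) * Λ * (Q * W)ᵀ) ≤ 2 * frobNorm (X - Q * (Qᵀ * X)) := by
  set E : Matrix (Fin n) (Fin n) ℝ := X - Q * (Qᵀ * X) with hE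
  have hXt : Xᵀ = X := hX
  have hM : X - (Q * W) * Λ * (Q * W)ᵀ = E + Q * (Qᵀ * Eᵀ) := by
    have h1 : (Q * W) * Λ * (Q * W)ᵀ = Q * (W * Λ * Wᵀ) * Qᵀ := by
      simp only [transpose_mul, Matrix.mul_assoc]
    rw [h1, ← hdecomp, hS, hE]
    simp only [transpose_sub, transpose_mul, transpose_transpose, hXt,
      Matrix.mul_sub, Matrix.sub_mul, Matrix.mul_assoc]
    abel
  rw [hM]
  have tri : frobNorm (E + Q * (Qᵀ * Eᵀ)) ≤ frobNorm E + frobNorm (Q * (Qᵀ * Eᵀ)) := by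
    simp only [frob_eq_norm]; exact norm_add_le _ _
  have h2 : frobNorm (Q * (Qᵀ * Eᵀ)) = frobNorm (Qᵀ * Eᵀ) := frob_mul_left Q hQ _
  have h3 : Qᵀ * Eᵀ = (E * Q)ᵀ := by simp [transpose_mul]
  have h4 : frobNorm ((E * Q)ᵀ) = frobNorm (E * Q) := frob_transpose _
  have h5 : frobNorm (E * Q) ≤ frobNorm E := frob_mul_right Q hQ E
  calc frobNorm (E + Q * (Qᵀ * Eᵀ)) ≤ frobNorm E + frobNorm (Q * (Qᵀ * Eᵀ)) := tri
    _ = frobNorm E + frobNorm (E * Q) := by rw [h2, h3, h4]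
    _ ≤ frobNorm E + frobNorm E := by linarith
    _ = 2 * frobNorm E := by ring
end
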